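/- Let X be a real Banach space with the convex diametral local diameter two property (B_X = cl conv Δ, where Δ is the set of Δ-points of S_X). Then X has the local diameter two property: every slice of B_X has diameter 2. -/
import Mathlib

/-- If `w` lies in the closed convex hull of `s` and `c < f w` for a continuous
linear functional `f`, then some point of `s` satisfies `c < f y`. -/
lemma stmt_16_aux {X : Type*} [NormedAddCommGroup X] [NormedSpace ℝ X]
    (f : X →L[ℝ] ℝ) (c : ℝ) (s : Set X) (w : X)
    (hw : w ∈ closure (convexHull ℝ s)) (hfw : c < f w) :
    ∃ y ∈ s, c < f y := by
  by_contra hcon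
  push_neg at hcon
  have hsub : s ⊆ {x : X | f x ≤ c} := fun y hy => hcon y hy
  have hconv : Convex ℝ {x : X | f x ≤ c} := by
    intro x hx y hy a b ha hb hab
    simp only [Set.mem_setOf_eq, map_add, map_smul, smul_eq_mul] at *
    calc a * f x + b * f y ≤ a * c + b * c :=
          add_le_add (mul_le_mul_of_nonneg_left hx ha) (mul_le_mul_of_nonneg_left hy hb)
      _ = c := by rw [← add_mul, hab, one_mul]
  have hclosed : IsClosed {x : X | f x ≤ c} := isClosed_le f.continuous continuous_const
  have := closure_minimal (convexHull_min hsub hconv) hclosed hw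
  exact absurd hfw (not_lt.mpr this)

/-- If a real Banach space `X` has the convex diametral local diameter two
property (`B_X` is the closed convex hull of the set of Δ-points), then `X`
has the local diameter two property: every slice of `B_X` has diameter `2`. -/
theorem stmt_16 {X : Type*} [NormedAddCommGroup X] [NormedSpace ℝ X] [CompleteSpace X]
    (h : Metric.closedBall (0 : X) 1 =
      closure (convexHull ℝ
        {x : X | ‖x‖ = 1 ∧ ∀ ε > (0 : ℝ),
          x ∈ closure (convexHull ℝ {y : X | ‖y‖ ≤ 1 ∧ 2 - ε ≤ ‖x - y‖})})) :
    ∀ f : X →L[ℝ] ℝ, ‖f‖ = 1 → ∀ ε > (0 : ℝ),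
      Metric.diam {x : X | ‖x‖ ≤ 1 ∧ 1 - ε < f x} = 2 := by
  intro f hf ε hε
  set S : Set X := {x : X | ‖x‖ ≤ 1 ∧ 1 - ε < f x} with hS
  have hSsub : S ⊆ Metric.closedBall (0 : X) 1 := fun x hx =>
    mem_closedBall_zero_iff.mpr hx.1
  have hSb : Bornology.IsBounded S :=
    (Metric.isBounded_closedBall (x := (0 : X)) (r := 1)).subset hSsub
  -- Step 1: find a point z of the ball with f z > max (1 - ε/2) 0
  have hr : max (1 - ε / 2) 0 < 1 := max_lt (by linarith) one_pos
  obtain ⟨z₀, hz₀, hfz₀⟩ := f.exists_lt_apply_of_lt_opNorm (by rw [hf]; exact hr)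
  have habs : max (1 - ε / 2) 0 < |f z₀| := by rwa [Real.norm_eq_abs] at hfz₀
  obtain ⟨z, hz, hfz⟩ : ∃ z : X, ‖z‖ ≤ 1 ∧ max (1 - ε / 2) 0 < f z := by
    rcases le_or_gt 0 (f z₀) with h0 | h0
    · exact ⟨z₀, hz₀.le, by rwa [abs_of_nonneg h0] at habs⟩
    · refine ⟨-z₀, by simpa using hz₀.le, ?_⟩
      rw [map_neg]
      rwa [abs_of_neg h0] at habs
  -- Step 2: find a Δ-point x in the slice with f x > 1 - ε/2
  have hzball : z ∈ Metric.closedBall (0 : X) 1 := mem_closedBall_zero_iff.mpr hz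
  rw [h] at hzball
  obtain ⟨x, hxΔ, hfx⟩ := stmt_16_aux f (1 - ε / 2) _ z hzball
    (lt_of_le_of_lt (le_max_left _ _) hfz)
  have hxS : x ∈ S := ⟨le_of_eq hxΔ.1, by linarith⟩
  -- diam S ≤ 2
  have hle : Metric.diam S ≤ 2 := by
    have h1 := Metric.diam_mono hSsub Metric.isBounded_closedBall
    have h2 := Metric.diam_closedBall (x := (0 : X)) (by norm_num : (0:ℝ) ≤ 1)
    linarith
  -- 2 ≤ diam S
  have hge : 2 ≤ Metric.diam S := by
    refine le_of_forall_pos_le_add ?_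
    intro δ hδ
    obtain ⟨y, hy, hfy⟩ := stmt_16_aux f (1 - ε) _ x (hxΔ.2 δ hδ) (by linarith)
    have hyS : y ∈ S := ⟨hy.1, hfy⟩
    have hdist : 2 - δ ≤ dist x y := by
      rw [dist_eq_norm]; exact hy.2
    have := Metric.dist_le_diam_of_mem hSb hxS hyS
    linarith
  linarith
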